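/- Let X be a real random variable with E|X| < ∞ whose distribution is atomless, and let α > 0. Then the function λ(t) = E ψ_α(X − t) is differentiable on ℝ with derivative λ'(t) = −P(|X − t| ≤ α) for every t ∈ ℝ. -/

import Mathlib

open MeasureTheory Filter

/-- The Huber score function: `ψ_α(x) = x` if `|x| ≤ α`, and `α · sign(x)` otherwise. -/
noncomputable def huberScore (α x : ℝ) : ℝ := if |x| ≤ α then x else α * Real.sign x

lemma huberScore_eq_clamp {α : ℝ} (hα : 0 < α) (x : ℝ) :
    huberScore α x = min α (max (-α) x) := by
  unfold huberScore
  rcases le_or_gt |x| α with h | h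
  · rw [if_pos h]
    rw [abs_le] at h
    rw [max_eq_right h.1, min_eq_right h.2]
  · rw [if_neg (not_le.mpr h)]
    rcases lt_or_ge x 0 with hx | hx
    · rw [Real.sign_of_neg hx]
      have hxα : x < -α := by rw [abs_of_neg hx] at h; linarith
      rw [max_eq_left hxα.le, min_eq_right (by linarith : -α ≤ α)]
      ring
    · rw [abs_of_nonneg hx] at h
      rw [Real.sign_of_pos (lt_trans hα h)]
      rw [max_eq_right (by linarith : -α ≤ x), min_eq_left h.le]
      ring

lemma lipschitz_huber {α : ℝ} (hα : 0 < α) : LipschitzWith 1 (huberScore α) := by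
  have h : LipschitzWith 1 (fun x : ℝ => min α (max (-α) x)) :=
    (LipschitzWith.id.const_max (-α)).const_min α
  have he : (fun x : ℝ => min α (max (-α) x)) = huberScore α := by
    funext x; rw [huberScore_eq_clamp hα]
  rwa [he] at h

lemma continuous_huber {α : ℝ} (hα : 0 < α) : Continuous (huberScore α) := by
  have he : (fun x : ℝ => min α (max (-α) x)) = huberScore α := by
    funext x; rw [huberScore_eq_clamp hα]
  rw [← he]
  exact continuous_const.min (continuous_const.max continuous_id)

lemma abs_huber_le {α : ℝ} (hα : 0 < α) (x : ℝ) : |huberScore α x| ≤ α := by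
  rw [huberScore_eq_clamp hα, abs_le]
  constructor
  · exact le_min (by linarith) (le_max_left _ _)
  · exact min_le_left _ _

lemma huber_deriv {α : ℝ} (hα : 0 < α) {x t : ℝ} (hne : |x - t| ≠ α) :
    HasDerivAt (fun s => huberScore α (x - s)) (if |x - t| ≤ α then (-1 : ℝ) else 0) t := by
  have hc : Continuous fun s : ℝ => x - s := by continuity
  rcases lt_or_gt_of_ne hne with h | h
  · rw [if_pos h.le]
    have hcc : Continuous fun s : ℝ => |x - s| := hc.abs
    have hev : ∀ᶠ s in nhds t, |x - s| < α :=
      (hcc.tendsto t).eventually_lt_const h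
    have hev2 : ∀ᶠ s in nhds t, huberScore α (x - s) = x - s := by
      filter_upwards [hev] with s hs
      exact if_pos hs.le
    exact HasDerivAt.congr_of_eventuallyEq
      (by simpa using (hasDerivAt_id t).const_sub x) hev2
  · rw [if_neg (not_le.mpr h)]
    rcases lt_or_ge (x - t) 0 with hs | hs
    · have hxt : x - t < -α := by
        rw [abs_of_neg hs] at h; linarith
      have hev : ∀ᶠ s in nhds t, x - s < -α :=
        (hc.tendsto t).eventually_lt_const hxt
      have hev2 : ∀ᶠ s in nhds t, huberScore α (x - s) = α * (-1) := by
        filter_upwards [hev] with s hs'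
        rw [huberScore, if_neg (by rw [abs_of_neg (by linarith)]; push_neg; linarith),
          Real.sign_of_neg (by linarith)]
      exact HasDerivAt.congr_of_eventuallyEq (hasDerivAt_const t (α * (-1))) hev2
    · have hxt : α < x - t := by
        rw [abs_of_nonneg hs] at h; linarith
      have hev : ∀ᶠ s in nhds t, α < x - s :=
        (hc.tendsto t).eventually_const_lt hxt
      have hev2 : ∀ᶠ s in nhds t, huberScore α (x - s) = α * 1 := by
        filter_upwards [hev] with s hs'
        rw [huberScore, if_neg (by rw [abs_of_pos (by linarith)]; push_neg; linarith),
          Real.sign_of_pos (by linarith)]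
      exact HasDerivAt.congr_of_eventuallyEq (hasDerivAt_const t (α * 1)) hev2

/-- If `E|X| < ∞` and the law of `X` is atomless, then
`λ(t) = E ψ_α(X − t)` is differentiable with `λ'(t) = −P(|X − t| ≤ α)`. -/
theorem huber_mean_hasDerivAt {Ω : Type*} [MeasureSpace Ω]
    [IsProbabilityMeasure (volume : Measure Ω)]
    (X : Ω → ℝ) (hXmeas : Measurable X) (hXint : Integrable X)
    (hatomless : ∀ c : ℝ, volume {ω | X ω = c} = 0)
    (α : ℝ) (hα : 0 < α) (t : ℝ) :
    HasDerivAt (fun s => ∫ ω, huberScore α (X ω - s))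
      (-(volume {ω | |X ω - t| ≤ α}).toReal) t := by
  set S : Set Ω := {ω | |X ω - t| ≤ α} with hS
  have hSmeas : MeasurableSet S :=
    measurableSet_le ((hXmeas.sub_const t).abs) measurable_const
  set F' : Ω → ℝ := fun ω => if |X ω - t| ≤ α then (-1 : ℝ) else 0 with hF'
  have hF'meas : Measurable F' := Measurable.ite hSmeas measurable_const measurable_const
  have key := hasDerivAt_integral_of_dominated_loc_of_lip
    (F := fun s ω => huberScore α (X ω - s)) (F' := F') (μ := volume)
    (bound := fun _ => (1 : ℝ)) (s := Metric.ball t 1) (Metric.ball_mem_nhds t one_pos)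
    (Eventually.of_forall fun s =>
      (((continuous_huber hα).measurable.comp (hXmeas.sub_const s)).aestronglyMeasurable))
    (by
      refine Integrable.mono' (integrable_const α) ?_ (ae_of_all _ fun ω => ?_)
      · exact (((continuous_huber hα).measurable.comp (hXmeas.sub_const t)).aestronglyMeasurable)
      · exact abs_huber_le hα _)
    hF'meas.aestronglyMeasurable
    (ae_of_all _ fun ω => by
      have hsub : LipschitzWith 1 (fun s : ℝ => X ω - s) :=
        LipschitzWith.of_dist_le_mul fun a b => by
          rw [Real.dist_eq, Real.dist_eq,
            show X ω - a - (X ω - b) = -(a - b) by ring, abs_neg]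
          simp
      have hl : LipschitzWith 1 (fun s => huberScore α (X ω - s)) := by
        have := (lipschitz_huber hα).comp hsub
        simpa [Function.comp_def] using this
      have h1 : Real.nnabs (1 : ℝ) = 1 := by simp
      rw [h1]
      exact hl.lipschitzOnWith)
    (integrable_const 1)
    (by
      have hN : volume {ω | |X ω - t| = α} = 0 := by
        have hsub : {ω | |X ω - t| = α} ⊆ {ω | X ω = t + α} ∪ {ω | X ω = t - α} := by
          intro ω h
          rcases (abs_eq hα.le).mp h with h' | h'
          · left; show X ω = t + α; linarith
          · right; show X ω = t - α; linarith
        exact measure_mono_null hsub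
          (measure_union_null (hatomless _) (hatomless _))
      have hae : ∀ᵐ ω, |X ω - t| ≠ α := by
        rw [ae_iff]
        simpa using hN
      filter_upwards [hae] with ω hω
      exact huber_deriv hα hω)
  obtain ⟨-, key⟩ := key
  have hint : ∫ ω, F' ω = -(volume S).toReal := by
    have heq : F' = S.indicator (fun _ => (-1 : ℝ)) := by
      funext ω
      simp only [hF', Set.indicator_apply]
      rfl
    rw [heq, integral_indicator_const _ hSmeas]
    simp [Measure.real]
  rwa [hint] at key
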